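/- Over the max-plus semifield, for an n×n matrix A with spectral radius λ > -∞, every vector of the form x = (λ^{-1} A)* u with u regular achieves x⁻ A x = λ; that is, the minimum of x⁻ A x over regular vectors x equals λ and is attained on all such vectors. -/

import Mathlib

/-- Max-plus matrix–vector product: `(A x)_i = max_j (a_{ij} + x_j)`. -/
noncomputable def mpMulVec {n : ℕ} (A : Fin n → Fin n → EReal) (x : Fin n → EReal) :
    Fin n → EReal :=
  fun i => Finset.univ.sup fun j => A i j + x j

/-- Max-plus matrix product. -/
noncomputable def mpMul {n : ℕ} (A B : Fin n → Fin n → EReal) :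
    Fin n → Fin n → EReal :=
  fun i j => Finset.univ.sup fun k => A i k + B k j

/-- Max-plus identity matrix: `0` on the diagonal and `-∞` elsewhere. -/
noncomputable def mpId {n : ℕ} : Fin n → Fin n → EReal :=
  fun i j => if i = j then 0 else ⊥

/-- Max-plus matrix power. -/
noncomputable def mpPow {n : ℕ} (A : Fin n → Fin n → EReal) : ℕ → (Fin n → Fin n → EReal)
  | 0 => mpId
  | k + 1 => mpMul (mpPow A k) A

/-- Max-plus trace: maximum of the diagonal entries. -/
noncomputable def mpTrace {n : ℕ} (A : Fin n → Fin n → EReal) : EReal :=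
  Finset.univ.sup fun i => A i i

/-- `Tr(A) = tr A ⊕ tr A² ⊕ ⋯ ⊕ tr Aⁿ`. -/
noncomputable def mpTr {n : ℕ} (A : Fin n → Fin n → EReal) : EReal :=
  (Finset.Icc 1 n).sup fun k => mpTrace (mpPow A k)

/-- The Kleene star `A* = I ⊕ A ⊕ ⋯ ⊕ A^{n-1}`. -/
noncomputable def mpStar {n : ℕ} (A : Fin n → Fin n → EReal) :
    Fin n → Fin n → EReal :=
  fun i j => (Finset.range n).sup fun k => mpPow A k i j

open Finset

-- sup-add distribution on EReal over nonempty finsets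
lemma esup_add {α : Type*} (s : Finset α) (hs : s.Nonempty) (f : α → EReal) (c : EReal) :
    s.sup f + c = s.sup fun a => f a + c := by
  obtain ⟨a0, ha0, h0⟩ := Finset.exists_mem_eq_sup s hs f
  apply le_antisymm
  · rw [h0]; exact Finset.le_sup (f := fun a => f a + c) ha0
  · exact Finset.sup_le fun a ha => add_le_add_left (Finset.le_sup ha) c

lemma add_esup {α : Type*} (s : Finset α) (hs : s.Nonempty) (f : α → EReal) (c : EReal) :
    c + s.sup f = s.sup fun a => c + f a := by
  rw [add_comm, esup_add s hs]
  simp_rw [add_comm]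

lemma ereal_add_cancel_coe {a b : EReal} (r : ℝ) (h : a + (r : EReal) ≤ b + (r : EReal)) :
    a ≤ b := by
  have h2 := add_le_add_left h ((-r : ℝ) : EReal)
  have : ((r:EReal) + ((-r:ℝ):EReal)) = 0 := by
    rw [← EReal.coe_add]; norm_num
  rwa [add_assoc, add_assoc, this, add_zero, add_zero] at h2

lemma ereal_nsmul_coe (k : ℕ) (m : ℝ) : k • ((m : ℝ) : EReal) = ((k * m : ℝ) : EReal) := by
  induction k with
  | zero => simp
  | succ k ih => rw [succ_nsmul, ih, ← EReal.coe_add, EReal.coe_eq_coe_iff]; push_cast; ring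

lemma ereal_nsmul_bot {k : ℕ} (hk : 1 ≤ k) : k • (⊥ : EReal) = ⊥ := by
  induction k with
  | zero => omega
  | succ k ih =>
    rcases Nat.eq_or_lt_of_le hk with h | h
    · simp [← h]
    · rw [succ_nsmul, ih (by omega)]; simp

section
variable {n : ℕ}

lemma univ_ne (hn : 0 < n) : (Finset.univ : Finset (Fin n)).Nonempty :=
  ⟨⟨0, hn⟩, Finset.mem_univ _⟩

lemma mpMul_assoc (hn : 0 < n) (A B C : Fin n → Fin n → EReal) :
    mpMul (mpMul A B) C = mpMul A (mpMul B C) := by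
  funext i j
  simp only [mpMul]
  rw [show (univ.sup fun k => (univ.sup fun l => A i l + B l k) + C k j)
      = univ.sup fun k => univ.sup fun l => (A i l + B l k) + C k j by
    refine Finset.sup_congr rfl fun k _ => ?_
    rw [esup_add _ (univ_ne hn)]]
  rw [show (univ.sup fun k => A i k + univ.sup fun l => B k l + C l j)
      = univ.sup fun k => univ.sup fun l => A i k + (B k l + C l j) by
    refine Finset.sup_congr rfl fun k _ => ?_
    rw [add_esup _ (univ_ne hn)]]
  rw [Finset.sup_comm]
  refine Finset.sup_congr rfl fun k _ => Finset.sup_congr rfl fun l _ => ?_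
  rw [add_assoc]

lemma mpMul_id (A : Fin n → Fin n → EReal) : mpMul A mpId = A := by
  funext i j
  simp only [mpMul, mpId]
  apply le_antisymm
  · refine Finset.sup_le fun k _ => ?_
    by_cases h : k = j <;> simp [h]
  · have := Finset.le_sup (f := fun k => A i k + if k = j then (0:EReal) else ⊥)
      (Finset.mem_univ j)
    simpa using this

lemma id_mpMul (A : Fin n → Fin n → EReal) : mpMul mpId A = A := by
  funext i j
  simp only [mpMul, mpId]
  apply le_antisymm
  · refine Finset.sup_le fun k _ => ?_
    by_cases h : i = k <;> simp [h]
  · have := Finset.le_sup (f := fun k => (if i = k then (0:EReal) else ⊥) + A k j)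
      (Finset.mem_univ i)
    simpa using this

lemma mpPow_add (hn : 0 < n) (A : Fin n → Fin n → EReal) (a b : ℕ) :
    mpPow A (a + b) = mpMul (mpPow A a) (mpPow A b) := by
  induction b with
  | zero => simp [mpPow, mpMul_id]
  | succ b ih =>
    show mpPow A (a + b + 1) = _
    rw [show mpPow A (a+b+1) = mpMul (mpPow A (a+b)) A from rfl, ih,
      mpMul_assoc hn]
    rfl

lemma mpPow_one (A : Fin n → Fin n → EReal) : mpPow A 1 = A := by
  show mpMul mpId A = A
  exact id_mpMul A

lemma mpPow_succ' (hn : 0 < n) (A : Fin n → Fin n → EReal) (k : ℕ) :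
    mpPow A (k + 1) = mpMul A (mpPow A k) := by
  rw [show k + 1 = 1 + k by omega, mpPow_add hn, mpPow_one]

lemma mpPow_ne_top (A : Fin n → Fin n → EReal) (hA : ∀ i j, A i j ≠ ⊤) :
    ∀ k i j, mpPow A k i j ≠ ⊤ := by
  intro k
  induction k with
  | zero =>
    intro i j; simp only [mpPow, mpId]
    split <;> simp
  | succ k ih =>
    intro i j
    show mpMul (mpPow A k) A i j ≠ ⊤
    rw [← lt_top_iff_ne_top, mpMul]
    refine Finset.sup_lt_iff (by exact bot_lt_top) |>.2 fun m _ => ?_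
    exact EReal.add_lt_top (ih i m) (hA m j)

end

section
variable {n : ℕ}

/-- Entrywise shift of matrix powers by a real constant. -/
lemma mpPow_shift (hn : 0 < n) (A : Fin n → Fin n → EReal) (c : ℝ) :
    ∀ k i j, mpPow (fun i j => A i j + (c : EReal)) k i j
      = mpPow A k i j + ((k * c : ℝ) : EReal) := by
  intro k
  induction k with
  | zero => intro i j; simp [mpPow]
  | succ k ih =>
    intro i j
    show mpMul _ (fun i j => A i j + (c:EReal)) i j = mpMul (mpPow A k) A i j + _
    simp only [mpMul]
    rw [esup_add _ (univ_ne hn)]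
    refine Finset.sup_congr rfl fun m _ => ?_
    rw [ih i m]
    have : (((k:ℝ) * c : ℝ) : EReal) + (c : EReal) = (((k+1 : ℕ) * c : ℝ) : EReal) := by
      rw [← EReal.coe_add, EReal.coe_eq_coe_iff]; push_cast; ring
    calc mpPow A k i m + ((k * c : ℝ) : EReal) + (A m j + (c:EReal))
        = mpPow A k i m + A m j + (((k:ℝ) * c : ℝ) + (c:EReal)) := by
          rw [add_assoc, add_assoc]; congr 1
          rw [← add_assoc, add_comm ((((k:ℝ))*c : ℝ) : EReal), add_assoc]
      _ = mpPow A k i m + A m j + (((k+1 : ℕ) * c : ℝ) : EReal) := by rw [this]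

/-- Bound on powers from a sub-eigenvector type inequality. -/
lemma mpPow_bound (hn : 0 < n) (A : Fin n → Fin n → EReal) (y : Fin n → ℝ) (μ : EReal)
    (h : ∀ i j, A i j + (y j : EReal) ≤ μ + (y i : EReal)) :
    ∀ k i j, mpPow A k i j + (y j : EReal) ≤ k • μ + (y i : EReal) := by
  intro k
  induction k with
  | zero =>
    intro i j
    simp only [mpPow, mpId, zero_nsmul, zero_add]
    split
    · next hij => subst hij; simp
    · simp
  | succ k ih =>
    intro i j
    show mpMul (mpPow A k) A i j + _ ≤ _
    rw [mpMul, esup_add _ (univ_ne hn)]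
    refine Finset.sup_le fun m _ => ?_
    calc mpPow A k i m + A m j + (y j : EReal)
        = mpPow A k i m + (A m j + (y j : EReal)) := by rw [add_assoc]
      _ ≤ mpPow A k i m + (μ + (y m : EReal)) := add_le_add_right (h m j) _
      _ = (mpPow A k i m + (y m : EReal)) + μ := by
          rw [add_comm μ, ← add_assoc]
      _ ≤ (k • μ + (y i : EReal)) + μ := add_le_add_left (ih i m) _
      _ = (k+1) • μ + (y i : EReal) := by
          rw [succ_nsmul]; abel

/-- lam is a lower bound for the objective over regular vectors. -/
lemma lam_lb (A : Fin n → Fin n → EReal) (lam : ℝ)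
    (hex : ∃ k ∈ Finset.Icc 1 n, mpTrace (mpPow A k) = (((k : ℝ) * lam : ℝ) : EReal))
    (y : Fin n → ℝ) :
    (lam : EReal) ≤ Finset.univ.sup fun i => Finset.univ.sup fun j =>
        (-(y i : EReal)) + A i j + (y j : EReal) := by
  obtain ⟨k, hk, htr⟩ := hex
  rw [Finset.mem_Icc] at hk
  have hn : 0 < n := lt_of_lt_of_le hk.1 hk.2
  set μ := Finset.univ.sup fun i => Finset.univ.sup fun j =>
        (-(y i : EReal)) + A i j + (y j : EReal) with hμ
  have h : ∀ i j, A i j + (y j : EReal) ≤ μ + (y i : EReal) := by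
    intro i j
    have h1 : (-(y i : EReal)) + A i j + (y j : EReal) ≤ μ :=
      le_trans (Finset.le_sup (f := fun j => (-(y i : EReal)) + A i j + (y j : EReal))
        (Finset.mem_univ j))
        (Finset.le_sup (f := fun i => Finset.univ.sup fun j =>
          (-(y i : EReal)) + A i j + (y j : EReal)) (Finset.mem_univ i))
    have h2 := add_le_add_right h1 ((y i : ℝ) : EReal)
    calc A i j + (y j : EReal)
        = ((y i : ℝ) : EReal) + ((-(y i : EReal)) + A i j + (y j : EReal)) := by
          rw [show (-(y i : EReal)) = (((-(y i) : ℝ)) : EReal) by rw [EReal.coe_neg],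
            ← add_assoc, ← add_assoc, ← EReal.coe_add]
          norm_num
      _ ≤ ((y i : ℝ) : EReal) + μ := h2
      _ = μ + (y i : EReal) := add_comm _ _
  -- find index attaining the trace
  obtain ⟨i0, _, hi0⟩ := Finset.exists_mem_eq_sup (Finset.univ : Finset (Fin n))
    (univ_ne hn) (fun i => mpPow A k i i)
  have htr' : mpPow A k i0 i0 = (((k : ℝ) * lam : ℝ) : EReal) := by
    rw [← hi0]; exact htr
  have hb := mpPow_bound hn A y μ h k i0 i0
  rw [htr'] at hb
  have hklam : ((((k : ℝ) * lam : ℝ)) : EReal) ≤ k • μ := by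
    apply ereal_add_cancel_coe (y i0)
    exact hb
  clear_value μ
  induction μ with
  | bot =>
    rw [ereal_nsmul_bot hk.1] at hklam
    exact absurd (le_bot_iff.1 hklam) (EReal.coe_ne_bot _)
  | coe m =>
    rw [ereal_nsmul_coe] at hklam
    rw [EReal.coe_le_coe_iff] at hklam ⊢
    have hk0 : (0:ℝ) < k := by exact_mod_cast hk.1
    nlinarith
  | top => exact le_top

end

section paths
variable {n : ℕ}

/-- Weight of the path starting at `i` and visiting the vertices of `l` in order. -/
noncomputable def listWt (B : Fin n → Fin n → EReal) : Fin n → List (Fin n) → EReal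
  | _, [] => 0
  | i, j :: l => B i j + listWt B j l

/-- Endpoint of the path starting at `i` visiting `l`. -/
def listEnd (i : Fin n) (l : List (Fin n)) : Fin n := l.getLastD i

@[simp] lemma listEnd_nil (i : Fin n) : listEnd i ([] : List (Fin n)) = i := rfl

lemma listEnd_cons (i a : Fin n) (l : List (Fin n)) :
    listEnd i (a :: l) = listEnd a l := by
  cases l with
  | nil => rfl
  | cons b l' => simp [listEnd, List.getLastD, List.getLast?_cons_cons]

lemma listEnd_append (i : Fin n) (l₁ l₂ : List (Fin n)) :
    listEnd i (l₁ ++ l₂) = listEnd (listEnd i l₁) l₂ := by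
  induction l₁ generalizing i with
  | nil => simp
  | cons a l ih => rw [List.cons_append, listEnd_cons, listEnd_cons, ih]

lemma listWt_append (B : Fin n → Fin n → EReal) (i : Fin n) (l₁ l₂ : List (Fin n)) :
    listWt B i (l₁ ++ l₂) = listWt B i l₁ + listWt B (listEnd i l₁) l₂ := by
  induction l₁ generalizing i with
  | nil => simp [listWt]
  | cons a l ih =>
    rw [List.cons_append, listEnd_cons]
    show B i a + listWt B a (l ++ l₂) = (B i a + listWt B a l) + _
    rw [ih, add_assoc]

lemma listEnd_take (i : Fin n) (l : List (Fin n)) :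
    ∀ s, s ≤ l.length → listEnd i (l.take s) = (i :: l).getD s i := by
  induction l generalizing i with
  | nil =>
    intro s hs
    have : s = 0 := Nat.le_zero.1 hs
    subst this; simp
  | cons a l ih =>
    intro s hs
    match s with
    | 0 => simp
    | s + 1 =>
      rw [List.take_succ_cons, listEnd_cons, List.getD_cons_succ]
      rw [ih a s (by simpa using hs)]
      have hlt : s < (a :: l).length := by
        simp only [List.length_cons] at hs ⊢; omega
      rw [List.getD_eq_getElem _ _ hlt, List.getD_eq_getElem _ _ hlt]

/-- Path weight is at most the corresponding matrix power entry. -/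
lemma listWt_le_pow (hn : 0 < n) (B : Fin n → Fin n → EReal) :
    ∀ (l : List (Fin n)) (i : Fin n),
      listWt B i l ≤ mpPow B l.length i (listEnd i l) := by
  intro l
  induction l with
  | nil => intro i; simp [listWt, mpPow, mpId]
  | cons a l ih =>
    intro i
    rw [listEnd_cons]
    show B i a + listWt B a l ≤ mpPow B (l.length + 1) i (listEnd a l)
    rw [mpPow_succ' hn]
    calc B i a + listWt B a l ≤ B i a + mpPow B l.length a (listEnd a l) :=
          add_le_add_right (ih a) _
      _ ≤ mpMul B (mpPow B l.length) i (listEnd a l) :=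
          Finset.le_sup (f := fun m => B i m + mpPow B l.length m (listEnd a l))
            (Finset.mem_univ a)

/-- Any non-bot matrix power entry is attained (bounded) by some path. -/
lemma pow_le_listWt (hn : 0 < n) (B : Fin n → Fin n → EReal) :
    ∀ (k : ℕ) (i j : Fin n), mpPow B k i j ≠ ⊥ →
      ∃ l : List (Fin n), l.length = k ∧ listEnd i l = j ∧
        mpPow B k i j ≤ listWt B i l := by
  intro k
  induction k with
  | zero =>
    intro i j hne
    have hij : i = j := by
      by_contra hij
      exact hne (by simp [mpPow, mpId, hij])
    subst hij
    exact ⟨[], rfl, rfl, by simp [mpPow, mpId, listWt]⟩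
  | succ k ih =>
    intro i j hne
    have hrep : mpPow B (k+1) i j
        = Finset.univ.sup fun m => mpPow B k i m + B m j := rfl
    obtain ⟨m, _, hm⟩ := Finset.exists_mem_eq_sup (Finset.univ : Finset (Fin n))
      (univ_ne hn) (fun m => mpPow B k i m + B m j)
    rw [hrep, hm] at hne ⊢
    have hkne : mpPow B k i m ≠ ⊥ := by
      intro hb; rw [hb] at hne; simp at hne
    obtain ⟨l, hlen, hend, hle⟩ := ih i m hkne
    refine ⟨l ++ [j], by simp [hlen], by rw [listEnd_append, hend]; rfl, ?_⟩
    rw [listWt_append, hend]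
    calc mpPow B k i m + B m j ≤ listWt B i l + B m j := add_le_add_left hle _
      _ = listWt B i l + listWt B m [j] := by
          show _ = listWt B i l + (B m j + 0); rw [add_zero]

end paths

section main
variable {n : ℕ}

lemma listWt_le_star (hn : 0 < n) (B : Fin n → Fin n → EReal)
    (htr : ∀ m ∈ Finset.Icc 1 n, mpTrace (mpPow B m) ≤ 0) :
    ∀ (N : ℕ) (l : List (Fin n)), l.length ≤ N → ∀ i : Fin n,
      listWt B i l ≤ mpStar B i (listEnd i l) := by
  intro N
  induction N with
  | zero =>
    intro l hl i
    have : l = [] := List.length_eq_zero_iff.1 (Nat.le_zero.1 hl)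
    subst this
    calc listWt B i [] ≤ mpPow B 0 i i := by simp [listWt, mpPow, mpId]
      _ ≤ mpStar B i i := Finset.le_sup (f := fun k => mpPow B k i i)
          (Finset.mem_range.2 hn)
  | succ N ihN =>
    intro l hl i
    rcases Nat.lt_or_ge l.length n with hsh | hlg
    · -- short path: directly bounded by a power < n
      calc listWt B i l ≤ mpPow B l.length i (listEnd i l) := listWt_le_pow hn B l i
        _ ≤ mpStar B i (listEnd i l) :=
          Finset.le_sup (f := fun k => mpPow B k i (listEnd i l))
            (Finset.mem_range.2 hsh)
    · -- long path: remove a cycle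
      -- vertex sequence
      set v : ℕ → Fin n := fun m => (i :: l).getD m i with hv
      have hcard : Fintype.card (Fin n) < Fintype.card (Fin (n+1)) := by simp
      obtain ⟨a, b, hab, hvab⟩ := Fintype.exists_ne_map_eq_of_card_lt
        (fun m : Fin (n+1) => v m) hcard
      -- wlog a < b
      obtain ⟨s, t, hst, htn, hvst⟩ : ∃ s t : ℕ, s < t ∧ t ≤ n ∧ v s = v t := by
        rcases lt_or_gt_of_ne hab with h | h
        · exact ⟨a, b, h, Nat.lt_succ_iff.1 b.isLt, hvab⟩
        · exact ⟨b, a, h, Nat.lt_succ_iff.1 a.isLt, hvab.symm⟩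
      have hsl : s ≤ l.length := le_trans (le_of_lt (lt_of_lt_of_le hst htn)) hlg
      have htl : t ≤ l.length := le_trans htn hlg
      -- decomposition
      have hdecomp : l = l.take s ++ (l.drop s).take (t - s) ++ l.drop t := by
        rw [← List.take_add, Nat.add_sub_cancel' (le_of_lt hst), List.take_append_drop]
      have hends : listEnd i (l.take s) = v s := by
        rw [listEnd_take i l s hsl]
      have hendt : listEnd i (l.take t) = v t := by
        rw [listEnd_take i l t htl]
      have htake : l.take t = l.take s ++ (l.drop s).take (t - s) := by
        rw [← List.take_add, Nat.add_sub_cancel' (le_of_lt hst)]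
      have hendmid : listEnd (v s) ((l.drop s).take (t - s)) = v s := by
        have := hendt
        rw [htake, listEnd_append, hends] at this
        rw [this, hvst]
      have hmidlen : ((l.drop s).take (t - s)).length = t - s := by
        rw [List.length_take, List.length_drop]
        omega
      -- cycle weight nonpositive
      have hcyc : listWt B (v s) ((l.drop s).take (t - s)) ≤ 0 := by
        calc listWt B (v s) ((l.drop s).take (t - s))
            ≤ mpPow B ((l.drop s).take (t - s)).length (v s)
                (listEnd (v s) ((l.drop s).take (t - s))) := listWt_le_pow hn B _ _
          _ = mpPow B (t - s) (v s) (v s) := by rw [hmidlen, hendmid]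
          _ ≤ mpTrace (mpPow B (t - s)) :=
              Finset.le_sup (f := fun i => mpPow B (t-s) i i) (Finset.mem_univ _)
          _ ≤ 0 := htr _ (Finset.mem_Icc.2 ⟨by omega, by omega⟩)
      -- shorter path
      set l' : List (Fin n) := l.take s ++ l.drop t with hl'
      have hl'len : l'.length < l.length := by
        rw [hl', List.length_append, List.length_take, List.length_drop]
        omega
      have hwt : listWt B i l ≤ listWt B i l' := by
        conv_lhs => rw [hdecomp]
        rw [listWt_append, listWt_append, listEnd_append, hends, hendmid,
          hl', listWt_append, hends]
        refine add_le_add_left (?_) _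
        calc listWt B i (l.take s) + listWt B (v s) ((l.drop s).take (t - s))
            ≤ listWt B i (l.take s) + 0 := add_le_add_right hcyc _
          _ = listWt B i (l.take s) := add_zero _
      have hend' : listEnd i l' = listEnd i l := by
        conv_rhs => rw [hdecomp]
        rw [hl', listEnd_append, hends, listEnd_append, listEnd_append, hends, hendmid]
      calc listWt B i l ≤ listWt B i l' := hwt
        _ ≤ mpStar B i (listEnd i l') := ihN l' (by omega) i
        _ = mpStar B i (listEnd i l) := by rw [hend']

lemma pow_le_star (hn : 0 < n) (B : Fin n → Fin n → EReal)
    (htr : ∀ m ∈ Finset.Icc 1 n, mpTrace (mpPow B m) ≤ 0) (k : ℕ) (i j : Fin n) :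
    mpPow B k i j ≤ mpStar B i j := by
  rcases Nat.lt_or_ge k n with h | h
  · exact Finset.le_sup (f := fun k => mpPow B k i j) (Finset.mem_range.2 h)
  · by_cases hb : mpPow B k i j = ⊥
    · rw [hb]; exact bot_le
    · obtain ⟨l, hlen, hend, hle⟩ := pow_le_listWt hn B k i j hb
      calc mpPow B k i j ≤ listWt B i l := hle
        _ ≤ mpStar B i (listEnd i l) := listWt_le_star hn B htr l.length l le_rfl i
        _ = mpStar B i j := by rw [hend]

end main

lemma ereal_add_coe_le_iff (a b : EReal) (r : ℝ) :
    a + (r : EReal) ≤ b ↔ a ≤ b + ((-r : ℝ) : EReal) := by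
  constructor
  · intro h
    have h2 := add_le_add_left h ((-r : ℝ) : EReal)
    have : ((r:EReal) + ((-r:ℝ):EReal)) = 0 := by rw [← EReal.coe_add]; norm_num
    rwa [add_assoc, this, add_zero] at h2
  · intro h
    have h2 := add_le_add_left h ((r : ℝ) : EReal)
    have : (((-r:ℝ):EReal) + (r:EReal)) = 0 := by rw [← EReal.coe_add]; norm_num
    rwa [add_assoc, this, add_zero] at h2


/-- Max-plus: if `lam` is the spectral radius of `A` (`lam` real), then for
every regular `u`, the vector `x = (lam⁻¹ A)* u` is regular and attains
`x⁻ A x = lam`; moreover `lam` is a lower bound of `y⁻ A y` over regular `y`,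
so the minimum of the objective equals `lam`. -/
theorem stmt16 {n : ℕ} (A : Fin n → Fin n → EReal) (hA : ∀ i j, A i j ≠ ⊤) (lam : ℝ)
    (hub : ∀ k ∈ Finset.Icc 1 n, mpTrace (mpPow A k) ≤ (((k : ℝ) * lam : ℝ) : EReal))
    (hex : ∃ k ∈ Finset.Icc 1 n, mpTrace (mpPow A k) = (((k : ℝ) * lam : ℝ) : EReal))
    (u : Fin n → ℝ) :
    (∀ i, mpMulVec (mpStar fun i j => A i j + ((-lam : ℝ) : EReal))
            (fun j => (u j : EReal)) i ≠ ⊥ ∧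
          mpMulVec (mpStar fun i j => A i j + ((-lam : ℝ) : EReal))
            (fun j => (u j : EReal)) i ≠ ⊤) ∧
    ((Finset.univ.sup fun i => Finset.univ.sup fun j =>
        -(mpMulVec (mpStar fun i' j' => A i' j' + ((-lam : ℝ) : EReal))
            (fun j' => (u j' : EReal)) i) + A i j +
          mpMulVec (mpStar fun i' j' => A i' j' + ((-lam : ℝ) : EReal))
            (fun j' => (u j' : EReal)) j) = (lam : EReal)) ∧
    (∀ y : Fin n → ℝ, (lam : EReal) ≤
      Finset.univ.sup fun i => Finset.univ.sup fun j =>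
        (-(y i : EReal)) + A i j + (y j : EReal)) := by
  have hn : 0 < n := by
    obtain ⟨k, hk, -⟩ := hex
    rw [Finset.mem_Icc] at hk
    omega
  set B : Fin n → Fin n → EReal := fun i j => A i j + ((-lam : ℝ) : EReal) with hB
  have hBtop : ∀ i j, B i j ≠ ⊤ := by
    intro i j
    rw [← lt_top_iff_ne_top]
    exact EReal.add_lt_top (hA i j) (EReal.coe_ne_top _)
  -- traces of B are nonpositive
  have htrB : ∀ m ∈ Finset.Icc 1 n, mpTrace (mpPow B m) ≤ 0 := by
    intro m hm
    have hsh : ∀ i, mpPow B m i i = mpPow A m i i + (((m : ℝ) * (-lam) : ℝ) : EReal) :=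
      fun i => mpPow_shift hn A (-lam) m i i
    have : mpTrace (mpPow B m)
        = mpTrace (mpPow A m) + (((m : ℝ) * (-lam) : ℝ) : EReal) := by
      rw [mpTrace, mpTrace, esup_add _ (univ_ne hn)]
      exact Finset.sup_congr rfl fun i _ => hsh i
    rw [this]
    calc mpTrace (mpPow A m) + (((m : ℝ) * (-lam) : ℝ) : EReal)
        ≤ (((m : ℝ) * lam : ℝ) : EReal) + (((m : ℝ) * (-lam) : ℝ) : EReal) :=
          add_le_add_left (hub m hm) _
      _ = 0 := by rw [← EReal.coe_add]; norm_num
  set x : Fin n → EReal := mpMulVec (mpStar B) (fun j => ((u j : ℝ) : EReal)) with hx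
  -- x is bounded below by u
  have hxlb : ∀ i, ((u i : ℝ) : EReal) ≤ x i := by
    intro i
    have h1 : (0 : EReal) ≤ mpStar B i i := by
      have := Finset.le_sup (f := fun k => mpPow B k i i) (Finset.mem_range.2 hn)
      calc (0 : EReal) = mpPow B 0 i i := by simp [mpPow, mpId]
        _ ≤ mpStar B i i := this
    calc ((u i : ℝ) : EReal) = 0 + ((u i : ℝ) : EReal) := (zero_add _).symm
      _ ≤ mpStar B i i + ((u i : ℝ) : EReal) := add_le_add_left h1 _
      _ ≤ x i := Finset.le_sup (f := fun j => mpStar B i j + ((u j : ℝ) : EReal))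
          (Finset.mem_univ i)
  have hreg : ∀ i, x i ≠ ⊥ ∧ x i ≠ ⊤ := by
    intro i
    constructor
    · intro hb
      have h := hxlb i
      rw [hb, le_bot_iff] at h
      exact EReal.coe_ne_bot _ h
    · rw [← lt_top_iff_ne_top]
      refine Finset.sup_lt_iff (by exact bot_lt_top) |>.2 fun j _ => ?_
      refine EReal.add_lt_top ?_ (EReal.coe_ne_top _)
      rw [← lt_top_iff_ne_top, mpStar]
      exact Finset.sup_lt_iff (by exact bot_lt_top) |>.2
        fun k _ => lt_top_iff_ne_top.2 (mpPow_ne_top B hBtop k i j)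
  set r : Fin n → ℝ := fun i => (x i).toReal with hr
  have hxr : ∀ i, x i = ((r i : ℝ) : EReal) := by
    intro i
    rw [hr]
    exact (EReal.coe_toReal (hreg i).2 (hreg i).1).symm
  -- the key sub-eigenvector inequality
  have hkey : ∀ i j, B i j + x j ≤ x i := by
    intro i j
    have hxj : x j = Finset.univ.sup fun l => mpStar B j l + ((u l : ℝ) : EReal) := rfl
    rw [hxj, add_esup _ (univ_ne hn)]
    refine Finset.sup_le fun l _ => ?_
    have hBS : B i j + mpStar B j l ≤ mpStar B i l := by
      rw [mpStar, add_esup _ ⟨0, Finset.mem_range.2 hn⟩]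
      refine Finset.sup_le fun k _ => ?_
      have h1 : B i j + mpPow B k j l ≤ mpPow B (k+1) i l := by
        rw [mpPow_succ' hn]
        exact Finset.le_sup (f := fun m => B i m + mpPow B k m l) (Finset.mem_univ j)
      exact le_trans h1 (pow_le_star hn B htrB (k+1) i l)
    calc B i j + (mpStar B j l + ((u l : ℝ) : EReal))
        = (B i j + mpStar B j l) + ((u l : ℝ) : EReal) := (add_assoc _ _ _).symm
      _ ≤ mpStar B i l + ((u l : ℝ) : EReal) := add_le_add_left hBS _
      _ ≤ x i := Finset.le_sup (f := fun m => mpStar B i m + ((u m : ℝ) : EReal))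
          (Finset.mem_univ l)
  refine ⟨hreg, ?_, fun y => lam_lb A lam hex y⟩
  -- part 2
  apply le_antisymm
  · refine Finset.sup_le fun i _ => Finset.sup_le fun j _ => ?_
    -- goal: -(x i) + A i j + x j ≤ lam
    have hk1 : (A i j + ((-lam : ℝ) : EReal)) + x j ≤ x i := hkey i j
    rw [hxr i, hxr j] at hk1 ⊢
    rw [ereal_add_coe_le_iff, ereal_add_coe_le_iff, neg_neg] at hk1
    -- hk1 : A i j ≤ ↑(r i) + ↑(-r j) + ↑lam
    show -((r i : ℝ) : EReal) + A i j + ((r j : ℝ) : EReal) ≤ (lam : EReal)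
    rw [ereal_add_coe_le_iff, ← EReal.coe_neg, add_comm (((-(r i) : ℝ)) : EReal) (A i j),
      ereal_add_coe_le_iff, neg_neg]
    calc A i j ≤ ((r i : ℝ) : EReal) + ((-(r j) : ℝ) : EReal) + (lam : EReal) := hk1
      _ = ((lam : ℝ) : EReal) + ((-(r j) : ℝ) : EReal) + ((r i : ℝ) : EReal) := by
          rw [← EReal.coe_add, ← EReal.coe_add, ← EReal.coe_add, ← EReal.coe_add,
            EReal.coe_eq_coe_iff]
          ring
  · have := lam_lb A lam hex r
    simp only [hxr]
    exact this
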